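/- For every n ∈ ℕ, all zeros of the polynomial V_n(z) = ∑_{m=0}^{n} U_m(z) lie in the real interval (−1, 1). -/

import Mathlib

open Polynomial

private lemma U_eval_w (w : ℂ) (hw : w ≠ 0) : ∀ m : ℕ,
    (w - w⁻¹) * (Polynomial.Chebyshev.U ℂ m).eval ((w + w⁻¹) / 2) = w ^ (m + 1) - (w⁻¹) ^ (m + 1) := by
  have hinv : w * w⁻¹ = 1 := mul_inv_cancel₀ hw
  have key : ∀ m : ℕ,
      (w - w⁻¹) * (Polynomial.Chebyshev.U ℂ m).eval ((w + w⁻¹) / 2) = w ^ (m + 1) - (w⁻¹) ^ (m + 1) ∧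
      (w - w⁻¹) * (Polynomial.Chebyshev.U ℂ ((m : ℤ) + 1)).eval ((w + w⁻¹) / 2)
        = w ^ (m + 2) - (w⁻¹) ^ (m + 2) := by
    intro m
    induction m with
    | zero =>
      constructor
      · simp [Polynomial.Chebyshev.U_zero]
      · have h1 : ((0 : ℕ) : ℤ) + 1 = 1 := by norm_num
        rw [h1, Polynomial.Chebyshev.U_one]
        simp only [eval_mul, eval_ofNat, eval_X]
        ring
    | succ k ih =>
      obtain ⟨ih1, ih2⟩ := ih
      have hc : ((k + 1 : ℕ) : ℤ) = (k : ℤ) + 1 := by push_cast; ring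
      constructor
      · rw [hc]; exact ih2
      · rw [hc, show (k : ℤ) + 1 + 1 = (k : ℤ) + 2 by ring,
          Polynomial.Chebyshev.U_add_two ℂ (k : ℤ)]
        simp only [eval_sub, eval_mul, eval_ofNat, eval_X]
        have expand : (w - w⁻¹) * (2 * ((w + w⁻¹) / 2) *
              eval ((w + w⁻¹) / 2) (Polynomial.Chebyshev.U ℂ ((k : ℤ) + 1))
            - eval ((w + w⁻¹) / 2) (Polynomial.Chebyshev.U ℂ (k : ℤ)))
            = (w + w⁻¹) * ((w - w⁻¹) *
                eval ((w + w⁻¹) / 2) (Polynomial.Chebyshev.U ℂ ((k : ℤ) + 1)))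
              - (w - w⁻¹) * eval ((w + w⁻¹) / 2) (Polynomial.Chebyshev.U ℂ (k : ℤ)) := by ring
        rw [expand, ih2, ih1]
        linear_combination (w ^ (k + 1) - w⁻¹ ^ (k + 1)) * hinv
  intro m; exact (key m).1

private lemma U_eval_one : ∀ m : ℕ, (Polynomial.Chebyshev.U ℂ m).eval 1 = (m : ℂ) + 1 := by
  have key : ∀ m : ℕ, (Polynomial.Chebyshev.U ℂ m).eval 1 = (m : ℂ) + 1 ∧
      (Polynomial.Chebyshev.U ℂ ((m : ℤ) + 1)).eval 1 = (m : ℂ) + 2 := by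
    intro m
    induction m with
    | zero =>
      refine ⟨by simp [Polynomial.Chebyshev.U_zero], ?_⟩
      rw [show ((0 : ℕ) : ℤ) + 1 = 1 by norm_num, Polynomial.Chebyshev.U_one]
      simp
    | succ k ih =>
      obtain ⟨ih1, ih2⟩ := ih
      have hc : ((k + 1 : ℕ) : ℤ) = (k : ℤ) + 1 := by push_cast; ring
      constructor
      · rw [hc, ih2]; push_cast; ring
      · rw [hc, show (k : ℤ) + 1 + 1 = (k : ℤ) + 2 by ring,
          Polynomial.Chebyshev.U_add_two ℂ (k : ℤ)]
        simp only [eval_sub, eval_mul, eval_ofNat, eval_X, ih1, ih2]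
        push_cast; ring
  intro m; exact (key m).1

private lemma U_eval_neg_one : ∀ m : ℕ,
    (Polynomial.Chebyshev.U ℂ m).eval (-1) = (-1) ^ m * ((m : ℂ) + 1) := by
  have key : ∀ m : ℕ, (Polynomial.Chebyshev.U ℂ m).eval (-1) = (-1) ^ m * ((m : ℂ) + 1) ∧
      (Polynomial.Chebyshev.U ℂ ((m : ℤ) + 1)).eval (-1) = (-1) ^ (m + 1) * ((m : ℂ) + 2) := by
    intro m
    induction m with
    | zero =>
      refine ⟨by simp [Polynomial.Chebyshev.U_zero], ?_⟩
      rw [show ((0 : ℕ) : ℤ) + 1 = 1 by norm_num, Polynomial.Chebyshev.U_one]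
      simp
    | succ k ih =>
      obtain ⟨ih1, ih2⟩ := ih
      have hc : ((k + 1 : ℕ) : ℤ) = (k : ℤ) + 1 := by push_cast; ring
      constructor
      · rw [hc, ih2]; push_cast; ring
      · rw [hc, show (k : ℤ) + 1 + 1 = (k : ℤ) + 2 by ring,
          Polynomial.Chebyshev.U_add_two ℂ (k : ℤ)]
        simp only [eval_sub, eval_mul, eval_ofNat, eval_X, ih1, ih2]
        push_cast; ring
  intro m; exact (key m).1

private lemma sum_identity (n : ℕ) (z : ℂ) :
    2 * (z - 1) * (∑ m ∈ Finset.range (n + 1), Polynomial.Chebyshev.U ℂ m).eval z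
      = (Polynomial.Chebyshev.U ℂ ((n : ℤ) + 1)).eval z - (Polynomial.Chebyshev.U ℂ n).eval z - 1 := by
  induction n with
  | zero =>
    rw [show ((0 : ℕ) : ℤ) + 1 = 1 by norm_num]
    simp [Polynomial.Chebyshev.U_zero, Polynomial.Chebyshev.U_one]
    ring
  | succ k ih =>
    rw [Finset.sum_range_succ]
    have hc : ((k + 1 : ℕ) : ℤ) = (k : ℤ) + 1 := by push_cast; ring
    rw [hc, show (k : ℤ) + 1 + 1 = (k : ℤ) + 2 by ring,
      Polynomial.Chebyshev.U_add_two ℂ (k : ℤ)]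
    simp only [eval_add, eval_sub, eval_mul, eval_ofNat, eval_X]
    linear_combination ih

theorem partial_sum_chebyshevU_zeros_in_interval (n : ℕ) (z : ℂ)
    (hz : (∑ m ∈ Finset.range (n + 1), Polynomial.Chebyshev.U ℂ m).eval z = 0) :
    ∃ x : ℝ, -1 < x ∧ x < 1 ∧ z = (x : ℂ) := by
  -- evaluations of the partial sum at ±1 are nonzero
  have hsum1 : (∑ m ∈ Finset.range (n + 1), Polynomial.Chebyshev.U ℂ m).eval 1 ≠ 0 := by
    rw [Polynomial.eval_finset_sum]
    have heq : ∑ m ∈ Finset.range (n + 1), (Polynomial.Chebyshev.U ℂ m).eval 1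
        = ((∑ m ∈ Finset.range (n + 1), (m + 1) : ℕ) : ℂ) := by
      push_cast
      exact Finset.sum_congr rfl fun m _ => U_eval_one m
    rw [heq]
    have hpos : 0 < ∑ m ∈ Finset.range (n + 1), (m + 1) :=
      Finset.sum_pos (fun m _ => Nat.succ_pos m) ⟨0, Finset.mem_range.2 (Nat.succ_pos n)⟩
    exact_mod_cast hpos.ne'
  have hsumneg1 : (∑ m ∈ Finset.range (n + 1), Polynomial.Chebyshev.U ℂ m).eval (-1) ≠ 0 := by
    rw [Polynomial.eval_finset_sum]
    have hval : ∀ N : ℕ, ∑ m ∈ Finset.range (N + 1), (Polynomial.Chebyshev.U ℂ m).eval (-1)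
        = (-1) ^ N * ((N / 2 : ℕ) + 1 : ℂ) := by
      intro N
      induction N with
      | zero => simpa using U_eval_neg_one 0
      | succ k ih =>
        rw [Finset.sum_range_succ, ih, U_eval_neg_one (k + 1)]
        rcases Nat.even_or_odd k with ⟨j, hj⟩ | ⟨j, hj⟩
        · subst hj
          rw [show (j + j) / 2 = j by omega, show (j + j + 1) / 2 = j by omega]
          push_cast
          ring
        · subst hj
          rw [show (2 * j + 1) / 2 = j by omega, show (2 * j + 1 + 1) / 2 = j + 1 by omega]
          push_cast
          ring
    rw [hval n]
    exact mul_ne_zero (pow_ne_zero _ (by norm_num)) (Nat.cast_add_one_ne_zero (n / 2))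
  have hz1 : z ≠ 1 := fun h => hsum1 (h ▸ hz)
  have hzneg1 : z ≠ -1 := fun h => hsumneg1 (h ▸ hz)
  -- find w with w + w⁻¹ = 2z
  set s : ℂ := (z ^ 2 - 1) ^ (((2 : ℕ) : ℂ))⁻¹ with hs
  have hs2 : s ^ 2 = z ^ 2 - 1 := by
    have := Complex.cpow_nat_inv_pow (z ^ 2 - 1) (n := 2) (by norm_num)
    simpa [hs] using this
  set w : ℂ := z + s with hwdef
  have hquad : w * (2 * z - w) = 1 := by
    have h : w * (2 * z - w) = z ^ 2 - s ^ 2 := by rw [hwdef]; ring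
    rw [h, hs2]; ring
  clear_value s w
  have hw0 : w ≠ 0 := by
    intro h
    rw [h, zero_mul] at hquad
    exact zero_ne_one hquad
  have hwinv : w⁻¹ = 2 * z - w := by
    exact inv_eq_of_mul_eq_one_right hquad
  have hzw : z = (w + w⁻¹) / 2 := by rw [hwinv]; ring
  have hwne1 : w ≠ 1 := by
    intro h
    apply hz1
    rw [hzw, h]; norm_num
  have hwneneg1 : w ≠ -1 := by
    intro h
    apply hzneg1
    rw [hzw, h]; norm_num
  have hwwinv : w * w⁻¹ = 1 := mul_inv_cancel₀ hw0
  have hdiff : w - w⁻¹ ≠ 0 := by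
    intro h
    have heq : w = w⁻¹ := by linear_combination h
    have hsq : w * w = 1 := by nth_rewrite 2 [heq]; exact hwwinv
    have : (w - 1) * (w + 1) = 0 := by linear_combination hsq
    rcases mul_eq_zero.1 this with h' | h'
    · exact hwne1 (by linear_combination h')
    · exact hwneneg1 (by linear_combination h')
  -- from the identity: U_{n+1}(z) - U_n(z) - 1 = 0
  have hkey : (Polynomial.Chebyshev.U ℂ ((n : ℤ) + 1)).eval z
      - (Polynomial.Chebyshev.U ℂ n).eval z - 1 = 0 := by
    rw [← sum_identity n z, hz]; ring
  have hU1 := U_eval_w w hw0 (n + 1)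
  have hU2 := U_eval_w w hw0 n
  rw [show ((n + 1 : ℕ) : ℤ) = (n : ℤ) + 1 by push_cast; ring] at hU1
  rw [← hzw] at hU1 hU2
  have hkey2 : w ^ (n + 2) - (w⁻¹) ^ (n + 2) - (w ^ (n + 1) - (w⁻¹) ^ (n + 1)) - (w - w⁻¹) = 0 := by
    rw [show n + 1 + 1 = n + 2 from rfl] at hU1
    calc w ^ (n + 2) - (w⁻¹) ^ (n + 2) - (w ^ (n + 1) - (w⁻¹) ^ (n + 1)) - (w - w⁻¹)
        = (w - w⁻¹) * ((Polynomial.Chebyshev.U ℂ ((n : ℤ) + 1)).eval z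
            - (Polynomial.Chebyshev.U ℂ (n : ℤ)).eval z - 1) := by
          rw [mul_sub, mul_sub, hU1, hU2, mul_one]
      _ = 0 := by rw [hkey, mul_zero]
  have hfact : (w - 1) * ((w ^ (n + 1) - 1) * (w ^ (n + 2) - 1)) = 0 := by
    have h := hkey2
    field_simp at h
    have h2 : w ^ (n + 2) * ((w - 1) * ((w ^ (n + 1) - 1) * (w ^ (n + 2) - 1))) = 0 := by
      have ha : w ^ (n + 2) * w⁻¹ ^ (n + 2) = 1 := by rw [← mul_pow, hwwinv, one_pow]
      have hb : w ^ (n + 1) * w⁻¹ ^ (n + 1) = 1 := by rw [← mul_pow, hwwinv, one_pow]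
      linear_combination w ^ (n + 2) * (w ^ (n + 2) * hkey2 + ha - w * hb - w ^ (n + 1) * hwwinv)
    rcases mul_eq_zero.1 h2 with h' | h'
    · exact absurd h' (pow_ne_zero _ hw0)
    · exact h'
  have hroot : w ^ (n + 1) = 1 ∨ w ^ (n + 2) = 1 := by
    rcases mul_eq_zero.1 hfact with h | h
    · exact absurd (by linear_combination h : w = 1) hwne1
    · rcases mul_eq_zero.1 h with h' | h'
      · exact Or.inl (by linear_combination h')
      · exact Or.inr (by linear_combination h')
  have habs : ‖w‖ = 1 := by
    have key : ∀ k : ℕ, w ^ (k + 1) = 1 → ‖w‖ = 1 := by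
      intro k hk
      have hpow : ‖w‖ ^ (k + 1) = 1 := by
        rw [← norm_pow, hk, norm_one]
      rcases lt_trichotomy ‖w‖ 1 with h | h | h
      · exfalso
        have := pow_lt_one₀ (norm_nonneg w) h (Nat.succ_ne_zero k)
        rw [hpow] at this; exact lt_irrefl 1 this
      · exact h
      · exfalso
        have := one_lt_pow₀ h (Nat.succ_ne_zero k)
        rw [hpow] at this; exact lt_irrefl 1 this
    rcases hroot with h | h
    · exact key n h
    · exact key (n + 1) h
  have hconj : w⁻¹ = starRingEnd ℂ w := Complex.inv_eq_conj habs
  have hzre : z = (w.re : ℂ) := by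
    rw [hzw, hconj, Complex.add_conj]
    push_cast
    ring
  have habsre : |w.re| ≤ 1 := habs ▸ Complex.abs_re_le_norm w
  refine ⟨w.re, ?_, ?_, hzre⟩
  · rcases lt_or_eq_of_le (abs_le.1 habsre).1 with h | h
    · exact h
    · exfalso
      apply hzneg1
      rw [hzre, ← h]
      norm_num
  · rcases lt_or_eq_of_le (abs_le.1 habsre).2 with h | h
    · exact h
    · exfalso
      apply hz1
      rw [hzre, h]
      norm_num
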